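/- Let E be a real inner product space, r > 0, and p₁, p₂, p₃ ∈ E with ‖p₁‖ = ‖p₂‖ = ‖p₃‖ = r and p₁ + p₂ + p₃ = 0. For w = (w₁, w₂, w₃) in the probability simplex define θ(w) := w₁p₁ + w₂p₂ + w₃p₃ and U(w) := −‖p₁ − θ(w)‖² − ‖p₂ − θ(w)‖² − Σᵢ wᵢ ‖pᵢ − θ(w)‖². Then: (i) U(1/3, 1/3, 1/3) = −3r² and the benefit of coordination B := U(1/2, 1/2, 0) − U(1/3, 1/3, 1/3) equals (3/4)r²; (ii) θ = 0 is the unique minimizer over E of the learner's risk θ ↦ (1/3)Σᵢ ‖pᵢ − θ‖², so θ* = 0 is the learner's best response to w* = (1/3, 1/3, 1/3); and (iii) for the fixed model θ* = 0, the population objective w ↦ −‖p₁‖² − ‖p₂‖² − Σᵢ wᵢ ‖pᵢ‖² is constant equal to −3r² on the simplex, so w* is a population best response to θ* and (w*, θ* = 0) is a performatively stable point. -/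
import Mathlib

open scoped RealInnerProductSpace


/-- **The equilateral-triangle example (Appendix C): the selfish stable point and the benefit
of coordination.** (i) `U(1/3, 1/3, 1/3) = −3r²` and
`B = U(1/2, 1/2, 0) − U(1/3, 1/3, 1/3) = (3/4)r²`; (ii) `θ* = 0` is the unique minimizer of
the learner's risk `θ ↦ (1/3)∑ᵢ ‖pᵢ − θ‖²`, so it is the learner's best response to
`w* = (1/3, 1/3, 1/3)`; (iii) for the fixed model `θ* = 0` the population objective is
constant `−3r²` on the simplex, so `w*` is a population best response to `θ*` and
`(w*, θ* = 0)` is performatively stable. -/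
theorem triangle_example_stable_point
    {E : Type*} [NormedAddCommGroup E] [InnerProductSpace ℝ E]
    (r : ℝ) (hr : 0 < r) (p₁ p₂ p₃ : E)
    (h1 : ‖p₁‖ = r) (h2 : ‖p₂‖ = r) (h3 : ‖p₃‖ = r) (hsum : p₁ + p₂ + p₃ = 0)
    (θ : ℝ → ℝ → ℝ → E)
    (hθ : ∀ w₁ w₂ w₃, θ w₁ w₂ w₃ = w₁ • p₁ + w₂ • p₂ + w₃ • p₃)
    (U : ℝ → ℝ → ℝ → ℝ)
    (hU : ∀ w₁ w₂ w₃, U w₁ w₂ w₃ =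
      -‖p₁ - θ w₁ w₂ w₃‖ ^ 2 - ‖p₂ - θ w₁ w₂ w₃‖ ^ 2 -
        (w₁ * ‖p₁ - θ w₁ w₂ w₃‖ ^ 2 + w₂ * ‖p₂ - θ w₁ w₂ w₃‖ ^ 2 +
          w₃ * ‖p₃ - θ w₁ w₂ w₃‖ ^ 2)) :
    -- (i) utility at the selfish equilibrium and the benefit of coordination
    (U (1 / 3) (1 / 3) (1 / 3) = -3 * r ^ 2 ∧
      U (1 / 2) (1 / 2) 0 - U (1 / 3) (1 / 3) (1 / 3) = 3 / 4 * r ^ 2) ∧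
    -- (ii) `θ* = 0` is the unique minimizer of the learner's risk under `w* = (1/3,1/3,1/3)`
    ((∀ θ' : E,
        1 / 3 * (‖p₁ - (0 : E)‖ ^ 2 + ‖p₂ - (0 : E)‖ ^ 2 + ‖p₃ - (0 : E)‖ ^ 2) ≤
          1 / 3 * (‖p₁ - θ'‖ ^ 2 + ‖p₂ - θ'‖ ^ 2 + ‖p₃ - θ'‖ ^ 2)) ∧
      (∀ θ' : E,
        1 / 3 * (‖p₁ - θ'‖ ^ 2 + ‖p₂ - θ'‖ ^ 2 + ‖p₃ - θ'‖ ^ 2) =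
          1 / 3 * (‖p₁ - (0 : E)‖ ^ 2 + ‖p₂ - (0 : E)‖ ^ 2 + ‖p₃ - (0 : E)‖ ^ 2) →
        θ' = 0)) ∧
    -- (iii) for the fixed model `θ* = 0` the population objective is constant on the simplex
    (∀ w₁ w₂ w₃ : ℝ, 0 ≤ w₁ → 0 ≤ w₂ → 0 ≤ w₃ → w₁ + w₂ + w₃ = 1 →
      -‖p₁‖ ^ 2 - ‖p₂‖ ^ 2 - (w₁ * ‖p₁‖ ^ 2 + w₂ * ‖p₂‖ ^ 2 + w₃ * ‖p₃‖ ^ 2) =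
        -3 * r ^ 2) := by
  have normsq : ∀ v : E, ‖v‖ ^ 2 = ⟪v, v⟫ := fun v =>
    (real_inner_self_eq_norm_sq v).symm
  have e1 : ⟪p₁, p₁⟫ = r ^ 2 := by rw [real_inner_self_eq_norm_sq, h1]
  have e2 : ⟪p₂, p₂⟫ = r ^ 2 := by rw [real_inner_self_eq_norm_sq, h2]
  have e3 : ⟪p₃, p₃⟫ = r ^ 2 := by rw [real_inner_self_eq_norm_sq, h3]
  have s1 : ⟪p₁, p₂⟫ + ⟪p₁, p₃⟫ = -r ^ 2 := by
    have h := congrArg (fun x => ⟪p₁, x⟫) hsum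
    simp only [inner_add_right, inner_zero_right] at h
    linarith [e1]
  have s2 : ⟪p₁, p₂⟫ + ⟪p₂, p₃⟫ = -r ^ 2 := by
    have h := congrArg (fun x => ⟪p₂, x⟫) hsum
    simp only [inner_add_right, inner_zero_right] at h
    rw [real_inner_comm p₁ p₂] at h
    linarith [e2]
  have s3 : ⟪p₁, p₃⟫ + ⟪p₂, p₃⟫ = -r ^ 2 := by
    have h := congrArg (fun x => ⟪p₃, x⟫) hsum
    simp only [inner_add_right, inner_zero_right] at h
    rw [real_inner_comm p₁ p₃, real_inner_comm p₂ p₃] at h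
    linarith [e3]
  have a12 : ⟪p₁, p₂⟫ = -r ^ 2 / 2 := by linarith
  have a13 : ⟪p₁, p₃⟫ = -r ^ 2 / 2 := by linarith
  have a23 : ⟪p₂, p₃⟫ = -r ^ 2 / 2 := by linarith
  have a21 : ⟪p₂, p₁⟫ = -r ^ 2 / 2 := by rw [real_inner_comm]; exact a12
  have a31 : ⟪p₃, p₁⟫ = -r ^ 2 / 2 := by rw [real_inner_comm]; exact a13
  have a32 : ⟪p₃, p₂⟫ = -r ^ 2 / 2 := by rw [real_inner_comm]; exact a23
  have θ0 : θ (1 / 3) (1 / 3) (1 / 3) = 0 := by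
    rw [hθ, ← smul_add, ← smul_add, hsum, smul_zero]
  have U0 : U (1 / 3) (1 / 3) (1 / 3) = -3 * r ^ 2 := by
    rw [hU, θ0]
    simp only [sub_zero, h1, h2, h3]
    ring
  have n1 : ‖p₁ - θ (1 / 2) (1 / 2) 0‖ ^ 2 = 3 / 4 * r ^ 2 := by
    rw [hθ, normsq]
    simp only [inner_sub_left, inner_sub_right, inner_add_left, inner_add_right,
      real_inner_smul_left, real_inner_smul_right, e1, e2, e3, a12, a13, a21, a23, a31, a32]
    ring
  have n2 : ‖p₂ - θ (1 / 2) (1 / 2) 0‖ ^ 2 = 3 / 4 * r ^ 2 := by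
    rw [hθ, normsq]
    simp only [inner_sub_left, inner_sub_right, inner_add_left, inner_add_right,
      real_inner_smul_left, real_inner_smul_right, e1, e2, e3, a12, a13, a21, a23, a31, a32]
    ring
  have n3 : ‖p₃ - θ (1 / 2) (1 / 2) 0‖ ^ 2 = 9 / 4 * r ^ 2 := by
    rw [hθ, normsq]
    simp only [inner_sub_left, inner_sub_right, inner_add_left, inner_add_right,
      real_inner_smul_left, real_inner_smul_right, e1, e2, e3, a12, a13, a21, a23, a31, a32]
    ring
  have risk : ∀ θ' : E, ‖p₁ - θ'‖ ^ 2 + ‖p₂ - θ'‖ ^ 2 + ‖p₃ - θ'‖ ^ 2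
      = 3 * r ^ 2 + 3 * ‖θ'‖ ^ 2 := by
    intro θ'
    have hz : ⟪p₁, θ'⟫ + ⟪p₂, θ'⟫ + ⟪p₃, θ'⟫ = 0 := by
      rw [← inner_add_left, ← inner_add_left, hsum, inner_zero_left]
    have q1 := normsq (p₁ - θ')
    have q2 := normsq (p₂ - θ')
    have q3 := normsq (p₃ - θ')
    simp only [inner_sub_left, inner_sub_right, real_inner_comm θ' p₁,
      real_inner_comm θ' p₂, real_inner_comm θ' p₃, e1, e2, e3] at q1 q2 q3
    simp only [real_inner_comm θ' p₁, real_inner_comm θ' p₂, real_inner_comm θ' p₃] at hz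
    rw [q1, q2, q3, normsq θ']
    linarith
  refine ⟨⟨U0, ?_⟩, ⟨?_, ?_⟩, ?_⟩
  · rw [U0, hU, n1, n2, n3]; ring
  · intro θ'
    rw [risk θ']
    have h0 := risk (0 : E)
    rw [norm_zero] at h0
    rw [h0]
    have := sq_nonneg ‖θ'‖
    linarith
  · intro θ' h
    rw [risk θ'] at h
    have h0 := risk (0 : E)
    rw [norm_zero] at h0
    rw [h0] at h
    have hn : ‖θ'‖ ^ 2 = 0 := by linarith
    have : ‖θ'‖ = 0 := by
      nlinarith [norm_nonneg θ']
    exact norm_eq_zero.mp this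
  · intro w₁ w₂ w₃ _ _ _ hw
    rw [h1, h2, h3]
    linear_combination (-(r ^ 2)) * hw
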